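/- Let M ≥ 1 be a real number and let α be a real number with 1/(2 − 1/(7.35841·M + 1)) ≤ α < 1/(2 − 1/(M + 1)). Define x = 1 − (1 − α)/(M(2α − 1) + 1 − α). Then 0 < x < 1 and 1/(x^x · (1 − x)^{1−x}) ≥ 3^{1/3}. -/

import Mathlib

open Real

set_option maxHeartbeats 1000000

/-- Lower bound for `log (1 - x)` from the Taylor series. -/
lemma log1m_lb (x : ℝ) (n : ℕ) (hx : |x| < 1) (q : ℝ)
    (h : q ≤ -(∑ i ∈ Finset.range n, x ^ (i + 1) / (i + 1)) - |x| ^ (n + 1) / (1 - |x|)) :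
    q ≤ Real.log (1 - x) := by
  have := Real.abs_log_sub_add_sum_range_le hx n
  rw [abs_le] at this
  linarith [this.1, this.2]

/-- Upper bound for `log (1 - x)` from the Taylor series. -/
lemma log1m_ub (x : ℝ) (n : ℕ) (hx : |x| < 1) (q : ℝ)
    (h : -(∑ i ∈ Finset.range n, x ^ (i + 1) / (i + 1)) + |x| ^ (n + 1) / (1 - |x|) ≤ q) :
    Real.log (1 - x) ≤ q := by
  have := Real.abs_log_sub_add_sum_range_le hx n
  rw [abs_le] at this
  linarith [this.1, this.2]

lemma L1_lb : (0.043826675511 : ℝ) ≤ Real.log (835841 / 800000) := by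
  have h : (835841 / 800000 : ℝ) = 1 - (-(35841 / 800000)) := by norm_num
  rw [h]
  refine log1m_lb _ 6 (by rw [abs_of_neg] <;> norm_num) _ ?_
  rw [abs_of_neg (by norm_num)]
  norm_num [Finset.sum_range_succ]

lemma L2_lb : (0.127424340465 : ℝ) ≤ Real.log (835841 / 735841) := by
  have h : (835841 / 735841 : ℝ) = 1 - (-(100000 / 735841)) := by norm_num
  rw [h]
  refine log1m_lb _ 10 (by rw [abs_of_neg] <;> norm_num) _ ?_
  rw [abs_of_neg (by norm_num)]
  norm_num [Finset.sum_range_succ]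

lemma L3_lb : (0.287682051090 : ℝ) ≤ Real.log (4 / 3) := by
  have h : Real.log (4 / 3 : ℝ) = -Real.log (1 - (1/4 : ℝ)) := by
    rw [← Real.log_inv]; norm_num
  rw [h]
  have hub : Real.log (1 - (1/4 : ℝ)) ≤ -(0.287682051090 : ℝ) := by
    apply log1m_ub _ 12 (by rw [abs_of_pos] <;> norm_num)
    rw [abs_of_pos (by norm_num)]
    norm_num [Finset.sum_range_succ]
  linarith

/-- The key numeric inequality at the endpoint `a = 100000/835841`. -/
lemma keyNum : (100000 / 835841 : ℝ) * Real.log (100000 / 835841)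
    + (735841 / 835841 : ℝ) * Real.log (735841 / 835841) ≤ -(Real.log 3 / 3) := by
  have e1 : Real.log (100000 / 835841 : ℝ)
      = -(3 * Real.log 2) - Real.log (835841 / 800000 : ℝ) := by
    have e : (100000 / 835841 : ℝ) = ((835841 : ℝ) / 800000)⁻¹ / 2 ^ 3 := by norm_num
    rw [e, Real.log_div (by positivity) (by positivity), Real.log_inv, Real.log_pow]
    push_cast; ring
  have e2 : Real.log (735841 / 835841 : ℝ) = -Real.log (835841 / 735841 : ℝ) := by
    rw [← Real.log_inv]; norm_num
  have e3 : Real.log 3 = 2 * Real.log 2 - Real.log (4 / 3 : ℝ) := by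
    rw [Real.log_div (by norm_num) (by norm_num),
      show (4 : ℝ) = 2 ^ 2 by norm_num, Real.log_pow]
    push_cast; ring
  have h2 := Real.log_two_lt_d9
  have h1 := L1_lb
  have hL2 := L2_lb
  have hL3 := L3_lb
  rw [e1, e2, e3]
  nlinarith [h2, h1, hL2, hL3]

/-- For `M ≥ 1` and `1/(2 - 1/(7.35841·M + 1)) ≤ α < 1/(2 - 1/(M + 1))`, setting
`x = 1 - (1 - α)/(M(2α - 1) + 1 - α)`, we have `0 < x < 1` and
`1/(x^x (1-x)^{1-x}) ≥ 3^{1/3}`. -/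
theorem stmt17 (M α : ℝ) (hM : 1 ≤ M)
    (hα₁ : 1 / (2 - 1 / (7.35841 * M + 1)) ≤ α)
    (hα₂ : α < 1 / (2 - 1 / (M + 1)))
    (x : ℝ) (hx : x = 1 - (1 - α) / (M * (2 * α - 1) + 1 - α)) :
    0 < x ∧ x < 1 ∧
    1 / (x ^ x * (1 - x) ^ (1 - x)) ≥ (3 : ℝ) ^ ((1 : ℝ) / 3) := by
  -- Part 1: bounds on x
  have hM1 : (0 : ℝ) < M + 1 := by linarith
  have hM7 : (0 : ℝ) < 7.35841 * M + 1 := by nlinarith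
  have hd2 : (0 : ℝ) < 2 - 1 / (M + 1) := by
    have : 1 / (M + 1) ≤ 1 := by rw [div_le_one hM1]; linarith
    linarith
  have hd1 : (0 : ℝ) < 2 - 1 / (7.35841 * M + 1) := by
    have : 1 / (7.35841 * M + 1) ≤ 1 := by rw [div_le_one hM7]; linarith
    linarith
  -- α * (2 - 1/(M+1)) < 1
  have h2' : α * (2 - 1 / (M + 1)) < 1 := (lt_div_iff₀ hd2).mp hα₂
  have h1' : 1 ≤ α * (2 - 1 / (7.35841 * M + 1)) := (div_le_iff₀ hd1).mp hα₁
  have e2 : (1 / (M + 1)) * (M + 1) = 1 := by field_simp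
  have e1 : (1 / (7.35841 * M + 1)) * (7.35841 * M + 1) = 1 := by field_simp
  have e2' : α * ((1 / (M + 1)) * (M + 1)) = α := by rw [e2, mul_one]
  have e1' : α * ((1 / (7.35841 * M + 1)) * (7.35841 * M + 1)) = α := by rw [e1, mul_one]
  have key2 := mul_lt_mul_of_pos_right h2' hM1
  have key1 := mul_le_mul_of_nonneg_right h1' hM7.le
  -- M(2α - 1) < 1 - α
  have hPN : M * (2 * α - 1) < 1 - α := by nlinarith [key2, e2']
  -- 1 - α ≤ 7.35841 * (M * (2α - 1))
  have hNP : 1 - α ≤ 7.35841 * (M * (2 * α - 1)) := by nlinarith [key1, e1']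
  have hhalf : 1 / 2 < α := by
    by_contra h
    push_neg at h
    nlinarith
  have hN : 0 < M * (2 * α - 1) := by nlinarith
  have hP : 0 < 1 - α := by nlinarith
  have hD : 0 < M * (2 * α - 1) + 1 - α := by linarith
  have hx0 : 0 < x := by
    rw [hx]
    have : (1 - α) / (M * (2 * α - 1) + 1 - α) < 1 := by
      rw [div_lt_one hD]; linarith
    linarith
  have hxhalf : x ≤ 1 / 2 := by
    rw [hx]
    have : 1 / 2 ≤ (1 - α) / (M * (2 * α - 1) + 1 - α) := by
      rw [le_div_iff₀ hD]; linarith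
    linarith
  have hx1 : x < 1 := by linarith
  have hxa : (100000 / 835841 : ℝ) ≤ x := by
    rw [hx]
    have : (1 - α) / (M * (2 * α - 1) + 1 - α) ≤ 735841 / 835841 := by
      rw [div_le_iff₀ hD]
      nlinarith
    linarith
  refine ⟨hx0, hx1, ?_⟩
  -- Part 2: monotonicity of the entropy-type function
  set f : ℝ → ℝ := fun t => t * Real.log t + (1 - t) * Real.log (1 - t) with hf
  have hder : ∀ t : ℝ, 0 < t → t < 1 →
      HasDerivAt f (Real.log t - Real.log (1 - t)) t := by
    intro t ht0 ht1
    have h1t : (0 : ℝ) < 1 - t := by linarith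
    have d1 : HasDerivAt (fun t : ℝ => t * Real.log t) (Real.log t + 1) t := by
      have := (hasDerivAt_id t).mul (Real.hasDerivAt_log ht0.ne')
      exact this.congr_deriv (by simp only [id, one_mul, mul_inv_cancel₀ ht0.ne'])
    have d2 : HasDerivAt (fun t : ℝ => 1 - t) (-1) t := (hasDerivAt_id t).const_sub 1
    have d3 : HasDerivAt (fun t : ℝ => Real.log (1 - t)) ((1 - t)⁻¹ * (-1)) t := by
      have := (Real.hasDerivAt_log h1t.ne').comp t d2
      exact this
    have d4 : HasDerivAt (fun t : ℝ => (1 - t) * Real.log (1 - t))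
        ((-1) * Real.log (1 - t) + (1 - t) * ((1 - t)⁻¹ * (-1))) t := d2.mul d3
    have := d1.add d4
    exact this.congr_deriv (by rw [mul_inv_cancel_left₀ h1t.ne']; ring)
  have ha0 : (0 : ℝ) < 100000 / 835841 := by norm_num
  have hmem : ∀ t ∈ Set.Icc (100000 / 835841 : ℝ) (1 / 2), 0 < t ∧ t < 1 := by
    intro t ht
    exact ⟨lt_of_lt_of_le ha0 ht.1, by have := ht.2; linarith⟩
  have hanti : AntitoneOn f (Set.Icc (100000 / 835841 : ℝ) (1 / 2)) := by
    apply antitoneOn_of_deriv_nonpos (convex_Icc _ _)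
    · intro t ht
      obtain ⟨ht0, ht1⟩ := hmem t ht
      exact ((hder t ht0 ht1).continuousAt).continuousWithinAt
    · intro t ht
      rw [interior_Icc] at ht
      obtain ⟨ht0, ht1⟩ := hmem t ⟨ht.1.le, ht.2.le⟩
      exact ((hder t ht0 ht1).differentiableAt).differentiableWithinAt
    · intro t ht
      rw [interior_Icc] at ht
      obtain ⟨ht0, ht1⟩ := hmem t ⟨ht.1.le, ht.2.le⟩
      rw [(hder t ht0 ht1).deriv]
      have : Real.log t ≤ Real.log (1 - t) := by
        apply Real.log_le_log ht0
        have := ht.2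
        linarith
      linarith
  have hfa : f (100000 / 835841 : ℝ) ≤ -(Real.log 3 / 3) := by
    have : (1 : ℝ) - 100000 / 835841 = 735841 / 835841 := by norm_num
    simp only [hf, this]
    exact keyNum
  have hfx : f x ≤ -(Real.log 3 / 3) := by
    have := hanti (Set.left_mem_Icc.mpr (by norm_num)) ⟨hxa, hxhalf⟩ hxa
    linarith
  -- Part 3: conclude via logs and rpow
  have h1x : 0 < 1 - x := by linarith
  have hPpos : 0 < x ^ x * (1 - x) ^ (1 - x) :=
    mul_pos (Real.rpow_pos_of_pos hx0 x) (Real.rpow_pos_of_pos h1x (1 - x))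
  have hlogP : Real.log (x ^ x * (1 - x) ^ (1 - x)) = f x := by
    rw [Real.log_mul (Real.rpow_pos_of_pos hx0 x).ne' (Real.rpow_pos_of_pos h1x (1 - x)).ne',
      Real.log_rpow hx0, Real.log_rpow h1x]
  have h3pos : (0 : ℝ) < 3 := by norm_num
  have hQ : (0 : ℝ) < (3 : ℝ) ^ (-(1 / 3) : ℝ) := Real.rpow_pos_of_pos h3pos _
  have hPle : x ^ x * (1 - x) ^ (1 - x) ≤ (3 : ℝ) ^ (-(1 / 3) : ℝ) := by
    rw [← Real.log_le_log_iff hPpos hQ, hlogP, Real.log_rpow h3pos]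
    linarith
  rw [ge_iff_le, le_div_iff₀ hPpos]
  calc (3 : ℝ) ^ ((1 : ℝ) / 3) * (x ^ x * (1 - x) ^ (1 - x))
      ≤ (3 : ℝ) ^ ((1 : ℝ) / 3) * (3 : ℝ) ^ (-(1 / 3) : ℝ) := by
        apply mul_le_mul_of_nonneg_left hPle (Real.rpow_pos_of_pos h3pos _).le
    _ = 1 := by
        rw [← Real.rpow_add h3pos]
        norm_num
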